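/- Suppose S(z) = D + C (I - Z(z)A)^{-1} Z(z) B where the colligation U = [[A, B],[C, D]] : X ⊕ U → X^d ⊕ Y is isometric (U*U = I). Then for all z, ζ in the open unit ball B^d of ℂ^d: I_U - S(z)* S(ζ) = B* (I - Z(z)* A*)^{-1} (I - Z(z)* Z(ζ)) (I - A Z(ζ))^{-1} B. -/

import Mathlib

open scoped ENNReal
set_option synthInstance.maxHeartbeats 400000
set_option maxHeartbeats 1000000

instance PiLp.instCompleteSpace' {p : ℝ≥0∞} {ι : Type*} {β : ι → Type*}
    [∀ i, UniformSpace (β i)] [∀ i, CompleteSpace (β i)] : CompleteSpace (PiLp p β) :=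
  (PiLp.uniformEquiv p β).completeSpace_iff.2 (Pi.complete β)

/-- The row operator `Z(z) = [z₁ I_X, …, z_d I_X] : X^d → X`. -/
noncomputable def rowOp {X : Type*} [NormedAddCommGroup X] [NormedSpace ℂ X]
    {d : ℕ} (z : EuclideanSpace ℂ (Fin d)) : PiLp 2 (fun _ : Fin d => X) →L[ℂ] X :=
  ∑ j : Fin d, z j • ((ContinuousLinearMap.proj j : (∀ _ : Fin d, X) →L[ℂ] X).comp
      (PiLp.continuousLinearEquiv 2 ℂ (fun _ : Fin d => X)).toContinuousLinearMap)

section Helpers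
open ContinuousLinearMap

lemma rowOp_apply' {X : Type*} [NormedAddCommGroup X] [NormedSpace ℂ X] {d : ℕ}
    (z : EuclideanSpace ℂ (Fin d)) (x : PiLp 2 (fun _ : Fin d => X)) :
    rowOp z x = ∑ j : Fin d, z j • x j := by
  simp [rowOp]

lemma norm_rowOp_le {X : Type*} [NormedAddCommGroup X] [NormedSpace ℂ X] {d : ℕ}
    (z : EuclideanSpace ℂ (Fin d)) : ‖(rowOp (X := X) z)‖ ≤ ‖z‖ := by
  refine ContinuousLinearMap.opNorm_le_bound _ (norm_nonneg z) fun x => ?_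
  rw [rowOp_apply']
  calc ‖∑ j : Fin d, z j • x j‖ ≤ ∑ j : Fin d, ‖z j‖ * ‖x j‖ := by
        refine (norm_sum_le _ _).trans ?_
        simp [norm_smul]
    _ ≤ ‖z‖ * ‖x‖ := by
        have h := Finset.sum_mul_sq_le_sq_mul_sq Finset.univ (fun j => ‖z j‖) (fun j => ‖x j‖)
        rw [EuclideanSpace.norm_eq, PiLp.norm_eq_of_L2, ← Real.sqrt_mul (by positivity)]
        exact Real.le_sqrt_of_sq_le h

lemma ringInverse_eq_of_mul {M : Type*} [MonoidWithZero M] {a b : M}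
    (h1 : a * b = 1) (h2 : b * a = 1) : Ring.inverse a = b := by
  have ha : IsUnit a := ⟨⟨a, b, h1, h2⟩, rfl⟩
  calc Ring.inverse a = Ring.inverse a * (a * b) := by rw [h1, mul_one]
    _ = (Ring.inverse a * a) * b := by rw [mul_assoc]
    _ = b := by rw [Ring.inverse_mul_cancel _ ha, one_mul]

lemma key_ring {R : Type*} [Ring R] (a b w p q : R)
    (hp1 : p * (1 - a) = 1) (hp2 : (1 - a) * p = 1)
    (hq2 : (1 - b) * q = 1) :
    1 + b * q + p * a + p * (a * b) * q - p * w * q = p * ((1 - w) * q) := by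
  have hq : q = 1 + b * q := by
    have h' : q - b * q = 1 := by rw [← hq2]; noncomm_ring
    rw [← h']; noncomm_ring
  have expand : (1 - a) * (1 + b * q + p * a + p * (a * b) * q)
      = (1 - a) + (1 - a) * (b * q) + ((1 - a) * p) * a + ((1 - a) * p) * (a * b * q) := by
    noncomm_ring
  have e1 : (1 - a) * (1 + b * q + p * a + p * (a * b) * q) = 1 + b * q := by
    rw [expand, hp2]; noncomm_ring
  have e2 : 1 + b * q + p * a + p * (a * b) * q = p * q := by
    calc 1 + b * q + p * a + p * (a * b) * q
        = (p * (1 - a)) * (1 + b * q + p * a + p * (a * b) * q) := by rw [hp1, one_mul]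
      _ = p * ((1 - a) * (1 + b * q + p * a + p * (a * b) * q)) := by rw [mul_assoc]
      _ = p * (1 + b * q) := by rw [e1]
      _ = p * q := by rw [← hq]
  calc 1 + b * q + p * a + p * (a * b) * q - p * w * q = p * q - p * w * q := by rw [e2]
    _ = p * ((1 - w) * q) := by noncomm_ring

variable {E F : Type*}
  [NormedAddCommGroup E] [InnerProductSpace ℂ E] [CompleteSpace E]
  [NormedAddCommGroup F] [InnerProductSpace ℂ F] [CompleteSpace F]

lemma adjoint_ringInverse (a : E →L[ℂ] E) (ha : IsUnit a) :
    ContinuousLinearMap.adjoint (Ring.inverse a) = Ring.inverse (ContinuousLinearMap.adjoint a) := by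
  symm
  apply ringInverse_eq_of_mul
  · rw [mul_def, ← adjoint_comp, ← mul_def, Ring.inverse_mul_cancel _ ha, one_def, adjoint_id]
  · rw [mul_def, ← adjoint_comp, ← mul_def, Ring.mul_inverse_cancel _ ha, one_def, adjoint_id]

omit [CompleteSpace E] [CompleteSpace F] in
lemma intertwine_inverse (T : E →L[ℂ] F) (a : E →L[ℂ] E) (b : F →L[ℂ] F)
    (ha : IsUnit a) (hb : IsUnit b) (h : T.comp a = b.comp T) :
    T.comp (Ring.inverse a) = (Ring.inverse b).comp T := by
  calc T.comp (Ring.inverse a)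
      = ((Ring.inverse b * b).comp T).comp (Ring.inverse a) := by
        rw [Ring.inverse_mul_cancel _ hb, one_def, id_comp]
    _ = (Ring.inverse b).comp ((T.comp a).comp (Ring.inverse a)) := by
        rw [mul_def, comp_assoc, comp_assoc, ← comp_assoc b T (Ring.inverse a), ← h]
    _ = (Ring.inverse b).comp (T.comp (a * Ring.inverse a)) := by
        rw [mul_def, comp_assoc]
    _ = (Ring.inverse b).comp T := by
        rw [Ring.mul_inverse_cancel _ ha, one_def, comp_id]

end Helpers

/-- for an isometric colligation `U = [[A,B],[C,D]]` (i.e. `U*U = I`,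
expressed componentwise) and `S(z) = D + C(I - Z(z)A)⁻¹Z(z)B`, one has
`I - S(z)*S(ζ) = B*(I - Z(z)*A*)⁻¹(I - Z(z)*Z(ζ))(I - AZ(ζ))⁻¹B` on the ball. -/
theorem isometric_realization_kernel_identity
    {X G Y : Type*}
    [NormedAddCommGroup X] [InnerProductSpace ℂ X] [CompleteSpace X]
    [NormedAddCommGroup G] [InnerProductSpace ℂ G] [CompleteSpace G]
    [NormedAddCommGroup Y] [InnerProductSpace ℂ Y] [CompleteSpace Y]
    {d : ℕ} (hd : 1 ≤ d)
    (A : X →L[ℂ] PiLp 2 (fun _ : Fin d => X))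
    (B : G →L[ℂ] PiLp 2 (fun _ : Fin d => X))
    (C : X →L[ℂ] Y) (D : G →L[ℂ] Y)
    (hiso1 : (ContinuousLinearMap.adjoint A).comp A
        + (ContinuousLinearMap.adjoint C).comp C = 1)
    (hiso2 : (ContinuousLinearMap.adjoint A).comp B
        + (ContinuousLinearMap.adjoint C).comp D = 0)
    (hiso3 : (ContinuousLinearMap.adjoint B).comp A
        + (ContinuousLinearMap.adjoint D).comp C = 0)
    (hiso4 : (ContinuousLinearMap.adjoint B).comp B
        + (ContinuousLinearMap.adjoint D).comp D = 1)
    (S : EuclideanSpace ℂ (Fin d) → G →L[ℂ] Y)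
    (hS : ∀ z : EuclideanSpace ℂ (Fin d),
      S z = D + ((C.comp (Ring.inverse (1 - (rowOp z).comp A))).comp (rowOp z)).comp B) :
    ∀ z ζ : EuclideanSpace ℂ (Fin d), ‖z‖ < 1 → ‖ζ‖ < 1 →
      (1 : G →L[ℂ] G) - (ContinuousLinearMap.adjoint (S z)).comp (S ζ)
      = (((ContinuousLinearMap.adjoint B).comp
            (Ring.inverse ((1 : PiLp 2 (fun _ : Fin d => X) →L[ℂ] PiLp 2 (fun _ : Fin d => X))
              - (ContinuousLinearMap.adjoint (rowOp z)).comp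
                  (ContinuousLinearMap.adjoint A)))).comp
          ((1 : PiLp 2 (fun _ : Fin d => X) →L[ℂ] PiLp 2 (fun _ : Fin d => X))
            - (ContinuousLinearMap.adjoint (rowOp z)).comp (rowOp ζ))).comp
        ((Ring.inverse (1 - A.comp (rowOp ζ))).comp B) := by
  open ContinuousLinearMap in
  intro z ζ hz hζ
  -- norm of A
  have hA : ‖A‖ ≤ 1 := by
    refine ContinuousLinearMap.opNorm_le_bound _ zero_le_one fun x => ?_
    rw [one_mul]
    have hx1 : (ContinuousLinearMap.adjoint A) (A x)
        + (ContinuousLinearMap.adjoint C) (C x) = x := by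
      have := ContinuousLinearMap.ext_iff.mp hiso1 x
      simpa using this
    have hx2 : (‖A x‖ : ℂ) ^ 2 + (‖C x‖ : ℂ) ^ 2 = (‖x‖ : ℂ) ^ 2 := by
      have := congrArg (fun y => (inner ℂ y x : ℂ)) hx1
      simpa [inner_add_left, ContinuousLinearMap.adjoint_inner_left,
        inner_self_eq_norm_sq_to_K] using this
    have hx3 : ‖A x‖ ^ 2 + ‖C x‖ ^ 2 = ‖x‖ ^ 2 := by exact_mod_cast hx2
    nlinarith [norm_nonneg (A x), norm_nonneg x, norm_nonneg (C x)]
  have hZz := norm_rowOp_le (X := X) z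
  have hZζ := norm_rowOp_le (X := X) ζ
  -- units
  have h_zA : ‖(rowOp z).comp A‖ < 1 :=
    calc ‖(rowOp z).comp A‖ ≤ ‖rowOp (X := X) z‖ * ‖A‖ := opNorm_comp_le _ _
      _ ≤ ‖z‖ * 1 := mul_le_mul hZz hA (norm_nonneg A) (norm_nonneg z)
      _ < 1 := by rwa [mul_one]
  have h_ζA : ‖(rowOp ζ).comp A‖ < 1 :=
    calc ‖(rowOp ζ).comp A‖ ≤ ‖rowOp (X := X) ζ‖ * ‖A‖ := opNorm_comp_le _ _
      _ ≤ ‖ζ‖ * 1 := mul_le_mul hZζ hA (norm_nonneg A) (norm_nonneg ζ)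
      _ < 1 := by rwa [mul_one]
  have h_Aζ : ‖A.comp (rowOp ζ)‖ < 1 :=
    calc ‖A.comp (rowOp ζ)‖ ≤ ‖A‖ * ‖rowOp (X := X) ζ‖ := opNorm_comp_le _ _
      _ ≤ 1 * ‖ζ‖ := mul_le_mul hA hZζ (norm_nonneg (rowOp (X:=X) ζ)) zero_le_one
      _ < 1 := by rwa [one_mul]
  have h_Az : ‖A.comp (rowOp z)‖ < 1 :=
    calc ‖A.comp (rowOp z)‖ ≤ ‖A‖ * ‖rowOp (X := X) z‖ := opNorm_comp_le _ _
      _ ≤ 1 * ‖z‖ := mul_le_mul hA hZz (norm_nonneg (rowOp (X:=X) z)) zero_le_one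
      _ < 1 := by rwa [one_mul]
  have h_aZz : ‖(ContinuousLinearMap.adjoint (rowOp (X := X) z)).comp
      (ContinuousLinearMap.adjoint A)‖ < 1 := by
    rw [← ContinuousLinearMap.adjoint_comp,
      LinearIsometryEquiv.norm_map ContinuousLinearMap.adjoint (A.comp (rowOp z))]
    exact h_Az
  have h_aAz : ‖(ContinuousLinearMap.adjoint A).comp
      (ContinuousLinearMap.adjoint (rowOp (X := X) z))‖ < 1 := by
    rw [← ContinuousLinearMap.adjoint_comp,
      LinearIsometryEquiv.norm_map ContinuousLinearMap.adjoint ((rowOp z).comp A)]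
    exact h_zA
  have hu_zA : IsUnit (1 - (rowOp z).comp A) := isUnit_one_sub_of_norm_lt_one h_zA
  have hu_ζA : IsUnit (1 - (rowOp ζ).comp A) := isUnit_one_sub_of_norm_lt_one h_ζA
  have hu_Aζ : IsUnit (1 - A.comp (rowOp ζ)) := isUnit_one_sub_of_norm_lt_one h_Aζ
  have hu_p : IsUnit ((1 : PiLp 2 (fun _ : Fin d => X) →L[ℂ] PiLp 2 (fun _ : Fin d => X))
      - (ContinuousLinearMap.adjoint (rowOp z)).comp (ContinuousLinearMap.adjoint A)) :=
    isUnit_one_sub_of_norm_lt_one h_aZz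
  have hu_az : IsUnit ((1 : X →L[ℂ] X)
      - (ContinuousLinearMap.adjoint A).comp (ContinuousLinearMap.adjoint (rowOp z))) :=
    isUnit_one_sub_of_norm_lt_one h_aAz
  -- intertwinings
  have h5 : (rowOp ζ).comp (Ring.inverse (1 - A.comp (rowOp ζ)))
      = (Ring.inverse (1 - (rowOp ζ).comp A)).comp (rowOp ζ) := by
    refine intertwine_inverse _ _ _ hu_Aζ hu_ζA ?_
    simp only [comp_sub, sub_comp, one_def, comp_id, id_comp, comp_assoc]
  have h6 : (ContinuousLinearMap.adjoint (rowOp (X := X) z)).comp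
        (Ring.inverse ((1 : X →L[ℂ] X)
          - (ContinuousLinearMap.adjoint A).comp (ContinuousLinearMap.adjoint (rowOp z))))
      = (Ring.inverse ((1 : PiLp 2 (fun _ : Fin d => X) →L[ℂ] PiLp 2 (fun _ : Fin d => X))
          - (ContinuousLinearMap.adjoint (rowOp z)).comp
            (ContinuousLinearMap.adjoint A))).comp
        (ContinuousLinearMap.adjoint (rowOp z)) := by
    refine intertwine_inverse _ _ _ hu_az hu_p ?_
    simp only [comp_sub, sub_comp, one_def, comp_id, id_comp, comp_assoc]
  have h7 : ContinuousLinearMap.adjoint (Ring.inverse (1 - (rowOp z).comp A))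
      = Ring.inverse ((1 : X →L[ℂ] X)
          - (ContinuousLinearMap.adjoint A).comp (ContinuousLinearMap.adjoint (rowOp z))) := by
    rw [adjoint_ringInverse _ hu_zA]
    congr 1
    rw [map_sub, ContinuousLinearMap.adjoint_comp]
    congr 1
    rw [one_def, ContinuousLinearMap.adjoint_id]
  -- abbreviations
  set Zz := rowOp (X := X) z with hZz_def
  set Zζ := rowOp (X := X) ζ with hZζ_def
  set As := ContinuousLinearMap.adjoint A with hAs_def
  set Bs := ContinuousLinearMap.adjoint B with hBs_def
  set Cs := ContinuousLinearMap.adjoint C with hCs_def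
  set Ds := ContinuousLinearMap.adjoint D with hDs_def
  set Zzs := ContinuousLinearMap.adjoint Zz with hZzs_def
  set p := Ring.inverse ((1 : PiLp 2 (fun _ : Fin d => X) →L[ℂ] PiLp 2 (fun _ : Fin d => X))
      - Zzs.comp As) with hp_def
  set q := Ring.inverse ((1 : PiLp 2 (fun _ : Fin d => X) →L[ℂ] PiLp 2 (fun _ : Fin d => X))
      - A.comp Zζ) with hq_def
  set Ez'' := Ring.inverse ((1 : X →L[ℂ] X) - As.comp Zzs) with hEz_def
  -- inverse cancellation facts
  have hp1 : p * (1 - Zzs.comp As) = 1 := Ring.inverse_mul_cancel _ hu_p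
  have hp2 : (1 - Zzs.comp As) * p = 1 := Ring.mul_inverse_cancel _ hu_p
  have hq2 : (1 - A.comp Zζ) * q = 1 := Ring.mul_inverse_cancel _ hu_Aζ
  -- reformulate S ζ and adjoint (S z)
  have hSζ : S ζ = D + (C.comp (Zζ.comp q)).comp B := by
    rw [hS ζ, h5]; rfl
  have h6' : Zzs.comp (Ez''.comp Cs) = (p.comp Zzs).comp Cs := by
    rw [← comp_assoc, h6]
  have hSz : ContinuousLinearMap.adjoint (S z) = Ds + Bs.comp ((p.comp Zzs).comp Cs) := by
    rw [hS z, map_add, ContinuousLinearMap.adjoint_comp, ContinuousLinearMap.adjoint_comp,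
      ContinuousLinearMap.adjoint_comp, h7, h6']
  -- isometry identities
  have ht1 : Ds.comp D = 1 - Bs.comp B := eq_sub_of_add_eq' hiso4
  have hDC : Ds.comp C = -(Bs.comp A) := eq_neg_of_add_eq_zero_right hiso3
  have hCD : Cs.comp D = -(As.comp B) := eq_neg_of_add_eq_zero_right hiso2
  have hCC : Cs.comp C = 1 - As.comp A := eq_sub_of_add_eq' hiso1
  -- the four cross terms
  have ht2 : Ds.comp ((C.comp (Zζ.comp q)).comp B)
      = -((Bs.comp ((A.comp Zζ).comp q)).comp B) := by
    calc Ds.comp ((C.comp (Zζ.comp q)).comp B)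
        = ((Ds.comp C).comp (Zζ.comp q)).comp B := rfl
      _ = ((-(Bs.comp A)).comp (Zζ.comp q)).comp B := by rw [hDC]
      _ = -((Bs.comp ((A.comp Zζ).comp q)).comp B) := by rw [neg_comp, neg_comp]; rfl
  have ht3 : (Bs.comp ((p.comp Zzs).comp Cs)).comp D
      = -((Bs.comp (p.comp (Zzs.comp As))).comp B) := by
    calc (Bs.comp ((p.comp Zzs).comp Cs)).comp D
        = Bs.comp ((p.comp Zzs).comp (Cs.comp D)) := rfl
      _ = Bs.comp ((p.comp Zzs).comp (-(As.comp B))) := by rw [hCD]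
      _ = -((Bs.comp (p.comp (Zzs.comp As))).comp B) := by rw [comp_neg, comp_neg]; rfl
  have ht4 : (Bs.comp ((p.comp Zzs).comp Cs)).comp ((C.comp (Zζ.comp q)).comp B)
      = (Bs.comp ((p.comp (Zzs.comp Zζ)).comp q)).comp B
        - (Bs.comp ((p.comp ((Zzs.comp As).comp (A.comp Zζ))).comp q)).comp B := by
    calc (Bs.comp ((p.comp Zzs).comp Cs)).comp ((C.comp (Zζ.comp q)).comp B)
        = Bs.comp ((p.comp Zzs).comp ((Cs.comp C).comp ((Zζ.comp q).comp B))) := rfl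
      _ = Bs.comp ((p.comp Zzs).comp
            (((1 : X →L[ℂ] X) - As.comp A).comp ((Zζ.comp q).comp B))) := by rw [hCC]
      _ = (Bs.comp ((p.comp (Zzs.comp Zζ)).comp q)).comp B
          - (Bs.comp ((p.comp ((Zzs.comp As).comp (A.comp Zζ))).comp q)).comp B := by
          rw [sub_comp, one_def, id_comp, comp_sub, comp_sub]; rfl
  -- the key ring identity
  have hkey := key_ring (Zzs.comp As) (A.comp Zζ) (Zzs.comp Zζ) p q hp1 hp2 hq2
  have hRHS : ((Bs.comp p).comp (1 - Zzs.comp Zζ)).comp (q.comp B)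
      = (Bs.comp (p * ((1 - Zzs.comp Zζ) * q))).comp B := rfl
  rw [hSz, hSζ, hRHS, ← hkey]
  simp only [comp_add, add_comp, ht1, ht2, ht3, ht4, comp_sub, sub_comp, mul_def, one_def,
    comp_id, id_comp]
  abel
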